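/- In the construction described in the context, if v^ℓ ∉ H, then the revenue of the λ-auction A_H on v^ℓ is 0. -/
import Mathlib


open Finset MeasureTheory

/-- An `n`-bidder, `m`-item allocation: pairwise disjoint bundles of items. -/
def Alloc (n m : ℕ) : Type :=
  {o : Fin n → Finset (Fin m) // ∀ i j, i ≠ j → o i ∩ o j = ∅}

instance (n m : ℕ) : Inhabited (Alloc n m) :=
  ⟨⟨fun _ => ∅, fun _ _ _ => by simp⟩⟩

instance (n m : ℕ) : Fintype (Alloc n m) :=
  Subtype.fintype _

instance (n m : ℕ) : Nonempty (Alloc n m) := ⟨default⟩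

/-- Maximum of a real-valued function over all allocations. -/
noncomputable def allocMax {n m : ℕ} (f : Alloc n m → ℝ) : ℝ :=
  Finset.univ.sup' Finset.univ_nonempty f

/-- A fixed (canonical) maximizer of a real-valued function over all allocations. -/
noncomputable def chooseMax {n m : ℕ} (f : Alloc n m → ℝ) : Alloc n m :=
  Classical.choose (Finset.exists_max_image Finset.univ f Finset.univ_nonempty)

/-- `os` maximizes the boosted weighted social welfare. -/
def IsMaxAlloc {n m : ℕ} (w : Fin n → ℝ) (lam : Alloc n m → ℝ)
    (v : Fin n → Finset (Fin m) → ℝ) (os : Alloc n m) : Prop :=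
  ∀ o : Alloc n m, (∑ j, w j * v j (o.1 j)) + lam o ≤ (∑ j, w j * v j (os.1 j)) + lam os

/-- Revenue of the AMA with weights `w`, boosts `lam`, on valuations `v`, when the
chosen (welfare-maximizing) allocation is `os`. -/
noncomputable def amaRev {n m : ℕ} (w : Fin n → ℝ) (lam : Alloc n m → ℝ)
    (v : Fin n → Finset (Fin m) → ℝ) (os : Alloc n m) : ℝ :=
  ∑ j, (w j)⁻¹ *
    (allocMax (fun o => (∑ l ∈ Finset.univ.erase j, w l * v l (o.1 l)) + lam o)
      - ((∑ l ∈ Finset.univ.erase j, w l * v l (os.1 l)) + lam os))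

/-- The boosts of the `c`-MBA. -/
def mbaLam {n m : ℕ} (c : ℝ) : Alloc n m → ℝ :=
  fun o => if ∃ i, o.1 i = Finset.univ then c else 0

/-- Revenue of the `c`-MBA (with a fixed tie-breaking rule). -/
noncomputable def mbaRev {n m : ℕ} (v : Fin n → Finset (Fin m) → ℝ) (c : ℝ) : ℝ :=
  amaRev (fun _ => 1) (mbaLam c) v
    (chooseMax fun o => (∑ j, v j (o.1 j)) + mbaLam c o)

/-- Revenue of the MBARP with grand-bundle boost `c` and item reserve prices `r`
(with a fixed tie-breaking rule); the seller participates as bidder `0`. -/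
noncomputable def mbarpRev {n m : ℕ} (v : Fin n → Finset (Fin m) → ℝ) (c : ℝ)
    (r : Fin m → ℝ) : ℝ :=
  let vx : Fin (n + 1) → Finset (Fin m) → ℝ :=
    fun i b => Fin.cases (∑ j ∈ b, r j) (fun i' => v i' b) i
  let g : Fin (n + 1) → Alloc (n + 1) m → ℝ :=
    fun i o => (∑ l ∈ Finset.univ.erase i, vx l (o.1 l)) + mbaLam c o
  let os : Alloc (n + 1) m := chooseMax fun o => (∑ i, vx i (o.1 i)) + mbaLam c o
  ∑ i : Fin n, (allocMax (g i.succ) - g i.succ os)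

/-- Empirical Rademacher complexity of a class `F` on the sample `S`. -/
noncomputable def empRad {X : Type*} (F : Set (X → ℝ)) {N : ℕ} (S : Fin N → X) : ℝ :=
  ((2 : ℝ) ^ N)⁻¹ * ∑ σ : Fin N → Bool,
    ⨆ f ∈ F, (N : ℝ)⁻¹ * ∑ i, (if σ i then (1 : ℝ) else -1) * f (S i)

/-- Rademacher complexity: expected empirical Rademacher complexity over i.i.d. samples. -/
noncomputable def radComp {X : Type*} [MeasurableSpace X] (D : Measure X)
    (F : Set (X → ℝ)) (N : ℕ) : ℝ :=
  ∫ S, empRad F S ∂(Measure.pi fun _ : Fin N => D)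

/-- Pseudo-shattering of the tuple `x` by the class `F`, with witnesses `z`. -/
def PShatters {X : Type*} (F : Set (X → ℝ)) {k : ℕ} (x : Fin k → X) : Prop :=
  ∃ z : Fin k → ℝ, ∀ T : Finset (Fin k), ∃ f ∈ F,
    (∀ i, i ∈ T → f (x i) ≤ z i) ∧ (∀ i, i ∉ T → z i < f (x i))

/-- A valuation is additive if it is determined by its values on singletons. -/
def AdditiveVal {n m : ℕ} (v : Fin n → Finset (Fin m) → ℝ) : Prop :=
  ∀ i b, v i b = ∑ j ∈ b, v i {j}

instance (n m : ℕ) : DecidableEq (Alloc n m) :=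
  fun a b => decidable_of_iff (a.1 = b.1) Subtype.ext_iff.symm

/-- An allocation in which all `m` items are allocated and no single bidder
receives all the items. -/
def SpecialAlloc {n m : ℕ} (o : Alloc n m) : Prop :=
  (∀ j : Fin m, ∃ i, j ∈ o.1 i) ∧ ∀ i, o.1 i ≠ Finset.univ

/-- The additive valuation vector associated with the allocation `o`: bidder `i`
values item `j` at `1` exactly when `j` belongs to the bundle `o.1 i`. -/
def vOf {n m : ℕ} (o : Alloc n m) : Fin n → Finset (Fin m) → ℝ :=
  fun i b => ((b ∩ o.1 i).card : ℝ)

/-- In the lower-bound construction for `λ`-auctions, if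
`õ ∉ H` then the revenue of the auction `A_H` on `v^õ` is `0`. -/
theorem stmt11 (n m : ℕ) (hn : 2 ≤ n) (hm : 2 ≤ m)
    (γ : ℝ) (hγ : γ ∈ Set.Ioo (0 : ℝ) 1)
    (H : Finset (Alloc n m)) (hH : ∀ o ∈ H, SpecialAlloc o)
    (ot : Alloc n m) (hsp : SpecialAlloc ot) (hot : ot ∉ H)
    (os : Alloc n m)
    (hos : IsMaxAlloc (fun _ => 1) (fun o => if o ∈ H then 0 else 1 - γ) (vOf ot) os) :
    amaRev (fun _ => 1) (fun o => if o ∈ H then 0 else 1 - γ) (vOf ot) os = 0 := by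
  set lam : Alloc n m → ℝ := fun o => if o ∈ H then 0 else 1 - γ with hlam
  have hlamle : ∀ o, lam o ≤ 1 - γ := by
    intro o; simp only [hlam]
    split
    · linarith [hγ.2]
    · exact le_refl _
  have hlamot : lam ot = 1 - γ := by simp [hlam, hot]
  have hcard : ∀ (o : Alloc n m) j, ((o.1 j ∩ ot.1 j).card : ℝ) ≤ ((ot.1 j).card : ℝ) := by
    intro o j
    exact_mod_cast Finset.card_le_card (Finset.inter_subset_right)
  -- os = ot
  have hsub : ∀ j, ot.1 j ⊆ os.1 j := by
    have h1 := hos ot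
    simp only [vOf, one_mul, Finset.inter_self] at h1
    have h2 : ∑ j, ((ot.1 j).card : ℝ) ≤ ∑ j, ((os.1 j ∩ ot.1 j).card : ℝ) := by
      have := hlamle os
      have := hlamot
      linarith
    have h3 : ∀ j ∈ Finset.univ, ((os.1 j ∩ ot.1 j).card : ℝ) ≤ ((ot.1 j).card : ℝ) :=
      fun j _ => hcard os j
    have h4 : ∑ j, ((os.1 j ∩ ot.1 j).card : ℝ) = ∑ j, ((ot.1 j).card : ℝ) :=
      le_antisymm (Finset.sum_le_sum h3) h2
    have h5 : ∀ j ∈ Finset.univ, ((os.1 j ∩ ot.1 j).card : ℝ) = ((ot.1 j).card : ℝ) :=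
      (Finset.sum_eq_sum_iff_of_le h3).mp h4
    intro j
    have h6 : (os.1 j ∩ ot.1 j).card = (ot.1 j).card := by
      exact_mod_cast h5 j (Finset.mem_univ j)
    have h7 : os.1 j ∩ ot.1 j = ot.1 j :=
      Finset.eq_of_subset_of_card_le Finset.inter_subset_right (le_of_eq h6.symm)
    exact (Finset.inter_eq_right.mp h7)
  have hoseq : os = ot := by
    apply Subtype.ext; funext j; apply Finset.ext
    intro x
    constructor
    · intro hx
      obtain ⟨k, hk⟩ := hsp.1 x
      have hxk : x ∈ os.1 k := hsub k hk
      by_cases hkj : k = j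
      · exact hkj ▸ hk
      · exfalso
        have := os.2 j k (fun h => hkj h.symm)
        have : x ∈ os.1 j ∩ os.1 k := Finset.mem_inter.mpr ⟨hx, hxk⟩
        simp_all
    · intro hx; exact hsub j hx
  subst hoseq
  -- revenue is zero
  unfold amaRev
  rw [Finset.sum_eq_zero]
  intro j _
  have hmax : allocMax (fun o : Alloc n m =>
      (∑ l ∈ Finset.univ.erase j, (1:ℝ) * vOf os l (o.1 l)) + lam o)
      = (∑ l ∈ Finset.univ.erase j, (1:ℝ) * vOf os l (os.1 l)) + lam os := by
    unfold allocMax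
    apply le_antisymm
    · apply Finset.sup'_le
      intro o _
      have hterm : ∀ l ∈ Finset.univ.erase j,
          (1:ℝ) * vOf os l (o.1 l) ≤ (1:ℝ) * vOf os l (os.1 l) := by
        intro l _
        simp only [vOf, one_mul, Finset.inter_self]
        exact hcard o l
      have := Finset.sum_le_sum hterm
      have := hlamle o
      have := hlamot
      linarith
    · exact Finset.le_sup' (fun o : Alloc n m =>
        (∑ l ∈ Finset.univ.erase j, (1:ℝ) * vOf os l (o.1 l)) + lam o) (Finset.mem_univ os)
  rw [hmax]
  simp
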